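/- The group of pure flat braids PfB_n is a split quotient of the pure virtual braid group PvB_n: there exist group homomorphisms ι: PfB_n → PvB_n and π: PvB_n → PfB_n with π ∘ ι = id. -/

import Mathlib

/-- Generators `R_{ij}`, `1 ≤ i ≠ j ≤ n`, of the pure virtual braid group. -/
def PvGen (n : ℕ) := {p : Fin n × Fin n // p.1 ≠ p.2}

/-- The free-group generator corresponding to `R_{ij}`. -/
def pvR {n : ℕ} (i j : Fin n) (h : i ≠ j) : FreeGroup (PvGen n) :=
  FreeGroup.of ⟨(i, j), h⟩

/-- Relators of the pure virtual braid group `PvB_n`: the Reidemeister III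
relations `R_{ij}R_{ik}R_{jk} = R_{jk}R_{ik}R_{ij}` for distinct `i,j,k` and the
commutativity relations `R_{ij}R_{kl} = R_{kl}R_{ij}` for distinct `i,j,k,l`. -/
def pvbRels (n : ℕ) : Set (FreeGroup (PvGen n)) :=
  {w | ∃ (i j k : Fin n) (hij : i ≠ j) (hik : i ≠ k) (hjk : j ≠ k),
      w = pvR i j hij * pvR i k hik * pvR j k hjk *
        (pvR j k hjk * pvR i k hik * pvR i j hij)⁻¹} ∪
  {w | ∃ (i j k l : Fin n) (hij : i ≠ j) (hik : i ≠ k) (hil : i ≠ l)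
      (hjk : j ≠ k) (hjl : j ≠ l) (hkl : k ≠ l),
      w = pvR i j hij * pvR k l hkl * (pvR k l hkl * pvR i j hij)⁻¹}

/-- The additional relators `R_{ij}R_{ji} = 1` of the flat braid group `PfB_n`. -/
def pfbExtraRels (n : ℕ) : Set (FreeGroup (PvGen n)) :=
  {w | ∃ (i j : Fin n) (hij : i ≠ j), w = pvR i j hij * pvR j i hij.symm}

/-- The pure virtual braid group `PvB_n`. -/
def PvB (n : ℕ) := PresentedGroup (pvbRels n)

/-- The group of pure flat braids `PfB_n`. -/
def PfB (n : ℕ) := PresentedGroup (pvbRels n ∪ pfbExtraRels n)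

noncomputable instance (n : ℕ) : Group (PvB n) := by unfold PvB; infer_instance
noncomputable instance (n : ℕ) : Group (PfB n) := by unfold PfB; infer_instance

lemma mk_rel_one {α : Type*} {rels : Set (FreeGroup α)} {r : FreeGroup α} (h : r ∈ rels) :
    PresentedGroup.mk rels r = 1 := by
  apply (QuotientGroup.eq_one_iff _).2
  exact Subgroup.subset_normalClosure h

lemma riii {n : ℕ} {R : Set (FreeGroup (PvGen n))} (hR : pvbRels n ⊆ R)
    (i j k : Fin n) (hij : i ≠ j) (hik : i ≠ k) (hjk : j ≠ k) :
    (PresentedGroup.of ⟨(i,j), hij⟩ : PresentedGroup R) * PresentedGroup.of ⟨(i,k), hik⟩ *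
      PresentedGroup.of ⟨(j,k), hjk⟩ =
    PresentedGroup.of ⟨(j,k), hjk⟩ * PresentedGroup.of ⟨(i,k), hik⟩ *
      PresentedGroup.of ⟨(i,j), hij⟩ := by
  have h := mk_rel_one (rels := R) (hR (Or.inl ⟨i, j, k, hij, hik, hjk, rfl⟩))
  rw [map_mul, map_inv, map_mul, map_mul, map_mul, mul_inv_eq_one] at h
  exact h

lemma rcomm {n : ℕ} {R : Set (FreeGroup (PvGen n))} (hR : pvbRels n ⊆ R)
    (i j k l : Fin n) (hij : i ≠ j) (hik : i ≠ k) (hil : i ≠ l)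
    (hjk : j ≠ k) (hjl : j ≠ l) (hkl : k ≠ l) :
    Commute (PresentedGroup.of ⟨(i,j), hij⟩ : PresentedGroup R)
      (PresentedGroup.of ⟨(k,l), hkl⟩) := by
  have h := mk_rel_one (rels := R)
    (hR (Or.inr ⟨i, j, k, l, hij, hik, hil, hjk, hjl, hkl, rfl⟩))
  rw [map_mul, map_inv, map_mul, map_mul, mul_inv_eq_one] at h
  exact h

/-- The image of the generator `R_{ij}` under the splitting `ι`:
`R_{ij}` if `i < j` and `R_{ji}⁻¹` otherwise. -/
noncomputable def iotaFun (n : ℕ) (p : PvGen n) : PresentedGroup (pvbRels n) :=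
  if p.1.1 < p.1.2 then PresentedGroup.of p
  else (PresentedGroup.of (⟨(p.1.2, p.1.1), p.2.symm⟩ : PvGen n))⁻¹

lemma iotaFun_apply {n : ℕ} (i j : Fin n) (h : i ≠ j) :
    iotaFun n ⟨(i, j), h⟩ =
      if i < j then PresentedGroup.of ⟨(i, j), h⟩
      else (PresentedGroup.of (⟨(j, i), h.symm⟩ : PvGen n))⁻¹ := rfl

lemma briii {n : ℕ} (i j k : Fin n) (hij : i ≠ j) (hik : i ≠ k) (hjk : j ≠ k) :
    iotaFun n ⟨(i,j), hij⟩ * iotaFun n ⟨(i,k), hik⟩ * iotaFun n ⟨(j,k), hjk⟩ =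
    iotaFun n ⟨(j,k), hjk⟩ * iotaFun n ⟨(i,k), hik⟩ * iotaFun n ⟨(i,j), hij⟩ := by
  have hR : pvbRels n ⊆ pvbRels n := le_refl _
  rw [iotaFun_apply, iotaFun_apply, iotaFun_apply]
  rcases hij.lt_or_gt with h1 | h1 <;> rcases hik.lt_or_gt with h2 | h2 <;>
    rcases hjk.lt_or_gt with h3 | h3
  · -- i<j, i<k, j<k
    rw [if_pos h1, if_pos h2, if_pos h3]
    exact riii hR i j k hij hik hjk
  · -- i<j, i<k, k<j
    rw [if_pos h1, if_pos h2, if_neg h3.asymm]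
    have h := congrArg (fun g => (PresentedGroup.of (rels := pvbRels n) (⟨(k,j), hjk.symm⟩ : PvGen n))⁻¹ * g *
      (PresentedGroup.of (rels := pvbRels n) (⟨(k,j), hjk.symm⟩ : PvGen n))⁻¹)
      (riii hR i k j hik hij hjk.symm)
    simp [mul_assoc] at h
    exact (mul_assoc _ _ _).trans (h.symm.trans (mul_assoc _ _ _).symm)
  · -- i<j, k<i, j<k : impossible
    exact absurd (h3.trans (h2.trans h1)) (lt_irrefl _)
  · -- i<j, k<i, k<j
    rw [if_pos h1, if_neg h2.asymm, if_neg h3.asymm]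
    have h := congrArg (fun g =>
        (PresentedGroup.of (rels := pvbRels n) (⟨(k,j), hjk.symm⟩ : PvGen n))⁻¹ *
        (PresentedGroup.of (rels := pvbRels n) (⟨(k,i), hik.symm⟩ : PvGen n))⁻¹ * g *
        (PresentedGroup.of (rels := pvbRels n) (⟨(k,i), hik.symm⟩ : PvGen n))⁻¹ *
        (PresentedGroup.of (rels := pvbRels n) (⟨(k,j), hjk.symm⟩ : PvGen n))⁻¹)
      (riii hR k i j hik.symm hjk.symm hij)
    simp [mul_assoc] at h
    exact (mul_assoc _ _ _).trans (h.trans (mul_assoc _ _ _).symm)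
  · -- j<i, i<k, j<k
    rw [if_neg h1.asymm, if_pos h2, if_pos h3]
    have h := congrArg (fun g => (PresentedGroup.of (rels := pvbRels n) (⟨(j,i), hij.symm⟩ : PvGen n))⁻¹ * g *
      (PresentedGroup.of (rels := pvbRels n) (⟨(j,i), hij.symm⟩ : PvGen n))⁻¹)
      (riii hR j i k hij.symm hjk hik)
    simp [mul_assoc] at h
    exact (mul_assoc _ _ _).trans (h.symm.trans (mul_assoc _ _ _).symm)
  · -- j<i, i<k, k<j : impossible
    exact absurd (h2.trans (h3.trans h1)) (lt_irrefl _)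
  · -- j<i, k<i, j<k
    rw [if_neg h1.asymm, if_neg h2.asymm, if_pos h3]
    have h := congrArg (fun g =>
        (PresentedGroup.of (rels := pvbRels n) (⟨(j,i), hij.symm⟩ : PvGen n))⁻¹ *
        (PresentedGroup.of (rels := pvbRels n) (⟨(k,i), hik.symm⟩ : PvGen n))⁻¹ * g *
        (PresentedGroup.of (rels := pvbRels n) (⟨(k,i), hik.symm⟩ : PvGen n))⁻¹ *
        (PresentedGroup.of (rels := pvbRels n) (⟨(j,i), hij.symm⟩ : PvGen n))⁻¹)
      (riii hR j k i hjk hij.symm hik.symm).symm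
    simp [mul_assoc] at h
    exact (mul_assoc _ _ _).trans (h.symm.trans (mul_assoc _ _ _).symm)
  · -- j<i, k<i, k<j
    rw [if_neg h1.asymm, if_neg h2.asymm, if_neg h3.asymm]
    have h := congrArg (fun g => g⁻¹)
      (riii hR k j i hjk.symm hik.symm hij.symm).symm
    simp only [mul_inv_rev, mul_assoc] at h
    exact (mul_assoc _ _ _).trans (h.symm.trans (mul_assoc _ _ _).symm)

lemma bcomm {n : ℕ} (i j k l : Fin n) (hij : i ≠ j) (hik : i ≠ k) (hil : i ≠ l)
    (hjk : j ≠ k) (hjl : j ≠ l) (hkl : k ≠ l) :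
    Commute (iotaFun n ⟨(i,j), hij⟩) (iotaFun n ⟨(k,l), hkl⟩) := by
  have hR : pvbRels n ⊆ pvbRels n := le_refl _
  rw [iotaFun_apply, iotaFun_apply]
  rcases hij.lt_or_gt with h1 | h1 <;> rcases hkl.lt_or_gt with h2 | h2
  · rw [if_pos h1, if_pos h2]
    exact rcomm hR i j k l hij hik hil hjk hjl hkl
  · rw [if_pos h1, if_neg h2.asymm]
    exact (rcomm hR i j l k hij hil hik hjl hjk hkl.symm).inv_right
  · rw [if_neg h1.asymm, if_pos h2]
    exact (rcomm hR j i k l hij.symm hjk hjl hik hil hkl).inv_left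
  · rw [if_neg h1.asymm, if_neg h2.asymm]
    exact ((rcomm hR j i l k hij.symm hjl hjk hil hik hkl.symm).inv_left).inv_right

lemma bextra {n : ℕ} (i j : Fin n) (hij : i ≠ j) :
    iotaFun n ⟨(i,j), hij⟩ * iotaFun n ⟨(j,i), hij.symm⟩ = 1 := by
  rw [iotaFun_apply, iotaFun_apply]
  rcases hij.lt_or_gt with h | h
  · rw [if_pos h, if_neg h.asymm]; exact mul_inv_cancel _
  · rw [if_neg h.asymm, if_pos h]; exact inv_mul_cancel _

lemma iota_rels {n : ℕ} :
    ∀ r ∈ pvbRels n ∪ pfbExtraRels n, FreeGroup.lift (iotaFun n) r = 1 := by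
  rintro r (hr | hr)
  · rcases hr with ⟨i, j, k, hij, hik, hjk, rfl⟩ | ⟨i, j, k, l, hij, hik, hil, hjk, hjl, hkl, rfl⟩
    · simp only [map_mul, map_inv, pvR, mul_inv_eq_one]
      erw [FreeGroup.lift_apply_of, FreeGroup.lift_apply_of, FreeGroup.lift_apply_of]
      exact briii i j k hij hik hjk
    · simp only [map_mul, map_inv, pvR, mul_inv_eq_one]
      erw [FreeGroup.lift_apply_of, FreeGroup.lift_apply_of]
      exact bcomm i j k l hij hik hil hjk hjl hkl
  · obtain ⟨i, j, hij, rfl⟩ := hr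
    rw [map_mul]
    simp only [pvR]
    erw [FreeGroup.lift_apply_of, FreeGroup.lift_apply_of]
    exact bextra i j hij

/-- `PfB_n` is a split quotient of `PvB_n`: there are homomorphisms
`ι : PfB_n → PvB_n` and `π : PvB_n → PfB_n` with `π ∘ ι = id`. -/
theorem pfb_split_quotient_of_pvb (n : ℕ) :
    ∃ (ι : PfB n →* PvB n) (π : PvB n →* PfB n),
      π.comp ι = MonoidHom.id (PfB n) := by
  have hg : FreeGroup.lift (PresentedGroup.of : PvGen n →
      PresentedGroup (pvbRels n ∪ pfbExtraRels n)) = PresentedGroup.mk _ :=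
    FreeGroup.ext_hom _ _ fun a => by rw [FreeGroup.lift_apply_of]; rfl
  have hπ : ∀ r ∈ pvbRels n, FreeGroup.lift (PresentedGroup.of : PvGen n →
      PresentedGroup (pvbRels n ∪ pfbExtraRels n)) r = 1 := by
    intro r hr
    rw [hg]
    exact mk_rel_one (Or.inl hr)
  have key : (PresentedGroup.toGroup hπ).comp (PresentedGroup.toGroup (iota_rels (n := n))) =
      MonoidHom.id (PresentedGroup (pvbRels n ∪ pfbExtraRels n)) := by
    refine PresentedGroup.ext fun x => ?_
    obtain ⟨⟨a, b⟩, hab⟩ := x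
    rw [MonoidHom.comp_apply, MonoidHom.id_apply]
    erw [PresentedGroup.toGroup.of]
    rw [iotaFun_apply]
    rcases hab.lt_or_gt with h | h
    · rw [if_pos h]; erw [PresentedGroup.toGroup.of]
    · rw [if_neg h.asymm]; erw [map_inv, PresentedGroup.toGroup.of]
      have hrel := mk_rel_one (rels := pvbRels n ∪ pfbExtraRels n)
        (Or.inr ⟨b, a, hab.symm, rfl⟩)
      rw [map_mul] at hrel
      exact inv_eq_of_mul_eq_one_right hrel
  exact ⟨PresentedGroup.toGroup (iota_rels (n := n)), PresentedGroup.toGroup hπ, key⟩
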